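/- arXiv:2302.09968 — 3 statements merged into one kernel-verified Lean document; each statement's English description precedes it below -/
import Mathlib

section
/- Let f(ε,t) be a family of functions, U a neighbourhood of 0 in ℂ, such that ε ↦ f(ε,t) is analytic in U for all t > 0 and |f(ε,t)| ≤ C min(1, t^{−(α+βε)}) for all t > 0 and real ε ∈ U, where C > 0, α ≤ 1, β ∈ ℝ. Then as ε → 0 (ε real, nonzero), ∫₀^∞ e^{−ε²t} f(ε,t) dt = O(|ε|^{2α−2}) if α < 1, and O(log|ε|) if α = 1. -/
open Real MeasureTheory Set Filter Asymptotics


lemma aux_pw {α β ε t : ℝ} (ht : 1 ≤ t) :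
    t ^ (-(α + β * ε)) ≤ exp (4 * β ^ 2) * (t ^ (-α) * exp (ε ^ 2 * t / 2)) := by
  have ht0 : (0:ℝ) < t := lt_of_lt_of_le one_pos ht
  have hlog0 : 0 ≤ log t := log_nonneg ht
  have hlog2 : log t ≤ 2 * Real.sqrt t := by
    have h1 : log (Real.sqrt t) ≤ Real.sqrt t - 1 :=
      Real.log_le_sub_one_of_pos (Real.sqrt_pos.2 ht0)
    have h2 : log (Real.sqrt t) = log t / 2 := Real.log_sqrt ht0.le
    have h3 : (0:ℝ) ≤ Real.sqrt t := Real.sqrt_nonneg t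
    linarith
  have key : -(β * ε) * log t ≤ 4 * β ^ 2 + ε ^ 2 * t / 2 := by
    have habs : -(β * ε) ≤ |β| * |ε| := by
      rw [← abs_mul]; exact neg_le_abs _
    have h1 : -(β * ε) * log t ≤ |β| * |ε| * log t :=
      mul_le_mul_of_nonneg_right habs hlog0
    have h2 : |β| * |ε| * log t ≤ |β| * |ε| * (2 * Real.sqrt t) :=
      mul_le_mul_of_nonneg_left hlog2 (by positivity)
    have h3 : |β| * |ε| * (2 * Real.sqrt t) ≤ 4 * β ^ 2 + ε ^ 2 * t / 4 := by
      nlinarith [sq_nonneg (2 * |β| - |ε| * Real.sqrt t / 2), sq_abs β, sq_abs ε,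
        Real.sq_sqrt ht0.le, Real.sqrt_nonneg t, abs_nonneg β, abs_nonneg ε]
    nlinarith [sq_nonneg ε, mul_nonneg (sq_nonneg ε) ht0.le]
  have e1 : t ^ (-(α + β * ε)) = t ^ (-α) * exp (-(β * ε) * log t) := by
    rw [Real.rpow_def_of_pos ht0, Real.rpow_def_of_pos ht0, ← Real.exp_add]
    ring_nf
  rw [e1]
  have e2 : exp (-(β * ε) * log t) ≤ exp (4 * β ^ 2) * exp (ε ^ 2 * t / 2) := by
    rw [← Real.exp_add]
    exact Real.exp_le_exp.2 key
  calc t ^ (-α) * exp (-(β * ε) * log t)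
      ≤ t ^ (-α) * (exp (4 * β ^ 2) * exp (ε ^ 2 * t / 2)) :=
        mul_le_mul_of_nonneg_left e2 (Real.rpow_nonneg ht0.le _)
    _ = exp (4 * β ^ 2) * (t ^ (-α) * exp (ε ^ 2 * t / 2)) := by ring

lemma aux_int {a b : ℝ} (hb : 0 < b) :
    IntegrableOn (fun t : ℝ => t ^ a * exp (-(b * t))) (Ioi 1) := by
  apply integrable_of_isBigO_exp_neg (half_pos hb)
  · apply ContinuousOn.mul
    · exact ContinuousOn.rpow_const continuousOn_id fun x hx =>
        Or.inl (ne_of_gt (lt_of_lt_of_le one_pos hx))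
    · exact (Real.continuous_exp.comp (continuous_const.mul continuous_id).neg).continuousOn
  · have h1 : (fun t : ℝ => t ^ a) =O[atTop] fun t => exp ((b / 2) * t) :=
      (isLittleO_rpow_exp_pos_mul_atTop a (half_pos hb)).isBigO
    have h2 := h1.mul (isBigO_refl (fun t : ℝ => exp (-(b * t))) atTop)
    apply h2.congr' EventuallyEq.rfl
    filter_upwards with t
    rw [← Real.exp_add]
    ring_nf



lemma aux_int0 {α b : ℝ} (hα : α < 1) (hb : 0 < b) :
    IntegrableOn (fun t : ℝ => t ^ (-α) * exp (-(b * t))) (Ioi 0) := by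
  have i2 : IntegrableOn (fun t : ℝ => t ^ (-α) * exp (-(b * t))) (Ioi 1) := aux_int hb
  have i1 : IntegrableOn (fun t : ℝ => t ^ (-α) * exp (-(b * t))) (Ioc 0 1) := by
    rw [integrableOn_Ioc_iff_integrableOn_Ioo]
    have hi : IntegrableOn (fun t : ℝ => t ^ (-α)) (Ioo (0:ℝ) 1) :=
      (intervalIntegral.integrableOn_Ioo_rpow_iff one_pos).2 (by linarith)
    apply Integrable.mono' hi
    · apply ContinuousOn.aestronglyMeasurable _ measurableSet_Ioo
      apply ContinuousOn.mul
      · exact ContinuousOn.rpow_const continuousOn_id fun x hx => Or.inl (ne_of_gt hx.1)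
      · exact (Real.continuous_exp.comp (continuous_const.mul continuous_id).neg).continuousOn
    · rw [ae_restrict_iff' measurableSet_Ioo]
      filter_upwards with t ht
      have h1 : (0:ℝ) < t ^ (-α) := Real.rpow_pos_of_pos ht.1 _
      have h2 : exp (-(b * t)) ≤ 1 := Real.exp_le_one_iff.2 (by nlinarith [ht.1.le])
      rw [Real.norm_eq_abs, abs_of_nonneg (by positivity)]
      nlinarith
  have := i1.union i2
  rwa [Ioc_union_Ioi_eq_Ioi zero_le_one] at this

lemma aux_gamma {α b : ℝ} (hα : α < 1) (hb : 0 < b) :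
    ∫ t in Ioi 1, t ^ (-α) * exp (-(b * t)) ≤ (1 / b) ^ (1 - α) * Real.Gamma (1 - α) := by
  have h0 : IntegrableOn (fun t : ℝ => t ^ (-α) * exp (-(b * t))) (Ioi 0) := aux_int0 hα hb
  have hmono : ∫ t in Ioi 1, t ^ (-α) * exp (-(b * t)) ≤
      ∫ t in Ioi 0, t ^ (-α) * exp (-(b * t)) := by
    apply setIntegral_mono_set h0
    · filter_upwards [ae_restrict_mem measurableSet_Ioi] with t ht
      have := Real.rpow_pos_of_pos (show (0:ℝ) < t from ht) (-α)
      positivity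
    · exact HasSubset.Subset.eventuallyLE (Ioi_subset_Ioi zero_le_one)
  refine hmono.trans_eq ?_
  have := integral_rpow_mul_exp_neg_mul_Ioi (by linarith : (0:ℝ) < 1 - α) hb
  rw [← this]
  apply setIntegral_congr_fun measurableSet_Ioi
  intro t _
  norm_num

lemma aux_log {b : ℝ} (hb0 : 0 < b) (hb1 : b ≤ 1) :
    ∫ t in Ioi 1, t ^ (-1:ℝ) * exp (-(b * t)) ≤ log (1 / b) + 1 := by
  have hT : (1:ℝ) ≤ 1 / b := by rw [le_div_iff₀ hb0]; linarith
  have hint : IntegrableOn (fun t : ℝ => t ^ (-1:ℝ) * exp (-(b * t))) (Ioi 1) := aux_int hb0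
  have i1 : IntegrableOn (fun t : ℝ => t ^ (-1:ℝ) * exp (-(b * t))) (Ioc 1 (1/b)) :=
    hint.mono_set Ioc_subset_Ioi_self
  have i2 : IntegrableOn (fun t : ℝ => t ^ (-1:ℝ) * exp (-(b * t))) (Ioi (1/b)) :=
    hint.mono_set (Ioi_subset_Ioi hT)
  have hsplit : ∫ t in Ioi 1, t ^ (-1:ℝ) * exp (-(b * t)) =
      (∫ t in Ioc 1 (1/b), t ^ (-1:ℝ) * exp (-(b * t))) +
        ∫ t in Ioi (1/b), t ^ (-1:ℝ) * exp (-(b * t)) := by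
    rw [← setIntegral_union (Ioc_disjoint_Ioi le_rfl) measurableSet_Ioi i1 i2,
      Ioc_union_Ioi_eq_Ioi hT]
  rw [hsplit]
  have hpart1 : (∫ t in Ioc 1 (1/b), t ^ (-1:ℝ) * exp (-(b * t))) ≤ log (1/b) := by
    have hinv : IntegrableOn (fun t : ℝ => t⁻¹) (Ioc 1 (1/b)) := by
      rw [← intervalIntegrable_iff_integrableOn_Ioc_of_le hT]
      apply intervalIntegral.intervalIntegrable_inv
      · intro x hx
        rw [Set.uIcc_of_le hT] at hx
        linarith [hx.1]
      · exact continuousOn_id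
    have h1 : (∫ t in Ioc 1 (1/b), t ^ (-1:ℝ) * exp (-(b * t))) ≤
        ∫ t in Ioc 1 (1/b), t⁻¹ := by
      apply setIntegral_mono_on i1 hinv measurableSet_Ioc
      intro t ht
      have ht0 : (0:ℝ) < t := lt_of_lt_of_le one_pos ht.1.le
      rw [Real.rpow_neg_one]
      have h2 : exp (-(b * t)) ≤ 1 := Real.exp_le_one_iff.2 (by nlinarith)
      nlinarith [inv_pos.2 ht0]
    refine h1.trans ?_
    rw [← intervalIntegral.integral_of_le hT, integral_inv (by
      rw [Set.uIcc_of_le hT]; intro h; exact absurd h.1 (by norm_num))]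
    rw [div_one]
  have hpart2 : (∫ t in Ioi (1/b), t ^ (-1:ℝ) * exp (-(b * t))) ≤ 1 := by
    have hbexp : IntegrableOn (fun t : ℝ => b * exp (-(b * t))) (Ioi (1/b)) := by
      simpa only [neg_mul, IntegrableOn] using (exp_neg_integrableOn_Ioi (1/b) hb0).const_mul b
    have h1 : (∫ t in Ioi (1/b), t ^ (-1:ℝ) * exp (-(b * t))) ≤
        ∫ t in Ioi (1/b), b * exp (-(b * t)) := by
      apply setIntegral_mono_on i2 hbexp measurableSet_Ioi
      intro t ht
      have htb : 1/b < t := ht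
      have ht0 : (0:ℝ) < t := lt_of_le_of_lt (by positivity) htb
      rw [Real.rpow_neg_one]
      have h2 : t⁻¹ ≤ b := by
        have h4 : 1 < t * b := (div_lt_iff₀ hb0).1 htb
        have h5 := inv_pos.2 ht0
        have h6 : t⁻¹ * t = 1 := inv_mul_cancel₀ ht0.ne'
        nlinarith
      have h3 : (0:ℝ) < exp (-(b * t)) := Real.exp_pos _
      nlinarith
    refine h1.trans ?_
    have hc : ∫ t in Ioi (1/b), exp (-(b * t)) = b⁻¹ * exp (-(b * (1/b))) := by
      have h := integral_comp_mul_left_Ioi (fun u : ℝ => exp (-u)) (1/b) hb0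
      simp only [smul_eq_mul] at h
      rw [h, integral_exp_neg_Ioi]
    rw [integral_const_mul, hc]
    have : b * (b⁻¹ * exp (-(b * (1/b)))) = exp (-(b * (1/b))) := by
      field_simp
    rw [this]
    exact Real.exp_le_one_iff.2 (by rw [neg_nonpos]; positivity)
  linarith



theorem stmt_6 (f : ℂ → ℝ → ℂ) (U : Set ℂ) (hU : U ∈ nhds (0:ℂ))
    (C α β : ℝ) (hC : 0 < C) (hα : α ≤ 1)
    (hanal : ∀ t : ℝ, 0 < t → AnalyticOn ℂ (fun ε => f ε t) U)
    (hmeas : ∀ ε : ℝ, (ε:ℂ) ∈ U → AEStronglyMeasurable (f ε) (volume.restrict (Set.Ioi 0)))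
    (hbound : ∀ (ε : ℝ) (t : ℝ), (ε:ℂ) ∈ U → 0 < t →
      ‖f ε t‖ ≤ C * min 1 (t ^ (-(α + β * ε)))) :
    (α < 1 →
      (fun ε : ℝ => ∫ t in Set.Ioi (0:ℝ), Real.exp (-ε ^ 2 * t) • f ε t)
        =O[nhdsWithin 0 {(0:ℝ)}ᶜ] fun ε : ℝ => |ε| ^ (2 * α - 2)) ∧
    (α = 1 →
      (fun ε : ℝ => ∫ t in Set.Ioi (0:ℝ), Real.exp (-ε ^ 2 * t) • f ε t)
        =O[nhdsWithin 0 {(0:ℝ)}ᶜ] fun ε : ℝ => Real.log |ε|) := by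
  set K := C * exp (4 * β ^ 2) with hK
  have hK0 : 0 < K := by positivity
  have key : ∀ ε : ℝ, (ε:ℂ) ∈ U → ε ≠ 0 →
      ‖∫ t in Set.Ioi (0:ℝ), Real.exp (-ε ^ 2 * t) • f ε t‖ ≤
        C + K * ∫ t in Ioi 1, t ^ (-α) * exp (-(ε ^ 2 / 2 * t)) := by
    intro ε hεU hε0
    have hb : 0 < ε ^ 2 / 2 := by positivity
    set g : ℝ → ℝ := fun t =>
      if t ≤ 1 then C else K * (t ^ (-α) * exp (-(ε ^ 2 / 2 * t))) with hg
    have i2' : IntegrableOn (fun t : ℝ => t ^ (-α) * exp (-(ε ^ 2 / 2 * t))) (Ioi 1) :=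
      aux_int hb
    have i1 : IntegrableOn g (Ioc 0 1) := by
      apply IntegrableOn.congr_fun (f := fun _ : ℝ => C)
        (integrableOn_const measure_Ioc_lt_top.ne)
        (fun t ht => by simp [hg, ht.2]) measurableSet_Ioc
    have i2 : IntegrableOn g (Ioi 1) := by
      apply IntegrableOn.congr_fun (i2'.const_mul K)
        (fun t ht => by simp [hg, not_le.2 (show (1:ℝ) < t from ht)]) measurableSet_Ioi
    have hgint : IntegrableOn g (Ioi 0) := by
      have := i1.union i2
      rwa [Ioc_union_Ioi_eq_Ioi zero_le_one] at this
    have hnorm : ‖∫ t in Ioi (0:ℝ), Real.exp (-ε ^ 2 * t) • f ε t‖ ≤ ∫ t in Ioi (0:ℝ), g t := by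
      refine (norm_integral_le_integral_norm _).trans ?_
      apply integral_mono_of_nonneg (Eventually.of_forall fun t => norm_nonneg _) hgint
      filter_upwards [ae_restrict_mem measurableSet_Ioi] with t ht
      have ht0 : (0:ℝ) < t := ht
      have hfb := hbound ε t hεU ht0
      rw [norm_smul, Real.norm_eq_abs, abs_of_pos (Real.exp_pos _)]
      by_cases h1 : t ≤ 1
      · have hexp1 : Real.exp (-ε ^ 2 * t) ≤ 1 :=
          Real.exp_le_one_iff.2 (by nlinarith [sq_nonneg ε])
        have hmin : min 1 (t ^ (-(α + β * ε))) ≤ 1 := min_le_left _ _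
        have hfC : ‖f ε t‖ ≤ C := hfb.trans (by nlinarith)
        simp only [hg, if_pos h1]
        nlinarith [norm_nonneg (f ε t), Real.exp_pos (-ε ^ 2 * t)]
      · push_neg at h1
        simp only [hg, if_neg (not_le.2 h1)]
        have hf2 : ‖f ε t‖ ≤ C * t ^ (-(α + β * ε)) :=
          hfb.trans (mul_le_mul_of_nonneg_left (min_le_right _ _) hC.le)
        have hpw := aux_pw (α := α) (β := β) (ε := ε) (t := t) h1.le
        have hexp : Real.exp (-ε ^ 2 * t) * Real.exp (ε ^ 2 * t / 2) =
            Real.exp (-(ε ^ 2 / 2 * t)) := by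
          rw [← Real.exp_add]; ring_nf
        calc Real.exp (-ε ^ 2 * t) * ‖f ε t‖
            ≤ Real.exp (-ε ^ 2 * t) * (C * t ^ (-(α + β * ε))) :=
              mul_le_mul_of_nonneg_left hf2 (Real.exp_pos _).le
          _ ≤ Real.exp (-ε ^ 2 * t) *
              (C * (exp (4 * β ^ 2) * (t ^ (-α) * exp (ε ^ 2 * t / 2)))) :=
              mul_le_mul_of_nonneg_left (mul_le_mul_of_nonneg_left hpw hC.le)
                (Real.exp_pos _).le
          _ = K * (t ^ (-α) * (Real.exp (-ε ^ 2 * t) * Real.exp (ε ^ 2 * t / 2))) := by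
              rw [hK]; ring
          _ = K * (t ^ (-α) * Real.exp (-(ε ^ 2 / 2 * t))) := by rw [hexp]
    have hsplit : ∫ t in Ioi (0:ℝ), g t = (∫ t in Ioc (0:ℝ) 1, g t) + ∫ t in Ioi (1:ℝ), g t := by
      rw [← setIntegral_union (Ioc_disjoint_Ioi le_rfl) measurableSet_Ioi i1 i2,
        Ioc_union_Ioi_eq_Ioi zero_le_one]
    have hg1 : ∫ t in Ioc (0:ℝ) 1, g t = C := by
      rw [setIntegral_congr_fun measurableSet_Ioc (g := fun _ => C)
        (fun t ht => by simp [hg, ht.2]), setIntegral_const]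
      simp [Real.volume_Ioc]
    have hg2 : ∫ t in Ioi (1:ℝ), g t =
        K * ∫ t in Ioi 1, t ^ (-α) * exp (-(ε ^ 2 / 2 * t)) := by
      rw [setIntegral_congr_fun measurableSet_Ioi
        (g := fun t => K * (t ^ (-α) * exp (-(ε ^ 2 / 2 * t))))
        (fun t ht => by simp [hg, not_le.2 (show (1:ℝ) < t from ht)]), integral_const_mul]
    rw [hsplit, hg1, hg2] at hnorm
    exact hnorm
  have hUev : ∀ᶠ ε : ℝ in nhdsWithin 0 {(0:ℝ)}ᶜ, (ε:ℂ) ∈ U := by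
    apply eventually_nhdsWithin_of_eventually_nhds
    have h := Complex.continuous_ofReal.continuousAt (x := (0:ℝ)).preimage_mem_nhds
      (by simpa using hU)
    exact Filter.eventually_of_mem h fun x hx => hx
  constructor
  · intro hα1
    rw [isBigO_iff]
    have hG : 0 < (2:ℝ) ^ (1 - α) * Real.Gamma (1 - α) := by
      have := Real.Gamma_pos_of_pos (by linarith : (0:ℝ) < 1 - α)
      positivity
    refine ⟨C + K * ((2:ℝ) ^ (1 - α) * Real.Gamma (1 - α)), ?_⟩
    have hsm : ∀ᶠ ε : ℝ in nhdsWithin 0 {(0:ℝ)}ᶜ, |ε| ≤ 1 := by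
      apply eventually_nhdsWithin_of_eventually_nhds
      filter_upwards [Metric.ball_mem_nhds (0:ℝ) one_pos] with ε hε
      rw [Metric.mem_ball, Real.dist_eq, sub_zero] at hε
      exact hε.le
    filter_upwards [hUev, hsm, self_mem_nhdsWithin] with ε hεU hε1 hε0'
    have hε0 : ε ≠ 0 := by simpa using hε0'
    have hb : 0 < ε ^ 2 / 2 := by positivity
    have h1 := key ε hεU hε0
    have h2 := aux_gamma hα1 hb
    have e1 : |ε| ^ (2 * α - 2) = (ε ^ 2) ^ (α - 1) := by
      rw [show (2 * α - 2 : ℝ) = (2:ℝ) * (α - 1) by ring, Real.rpow_mul (abs_nonneg ε),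
        show ((2:ℝ)) = ((2:ℕ):ℝ) by norm_num, Real.rpow_natCast, sq_abs]
    have e2 : ((1:ℝ) / (ε ^ 2 / 2)) ^ ((1:ℝ) - α) = 2 ^ ((1:ℝ) - α) * (ε ^ 2) ^ (α - 1) := by
      rw [show (1:ℝ) / (ε ^ 2 / 2) = 2 * (ε ^ 2)⁻¹ by
          field_simp,
        Real.mul_rpow (by norm_num) (inv_nonneg.2 (sq_nonneg ε)),
        ← Real.rpow_neg_one (ε ^ 2), ← Real.rpow_mul (sq_nonneg ε),
        show (-1 : ℝ) * (1 - α) = α - 1 by ring]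
    rw [e2] at h2
    have hone : 1 ≤ |ε| ^ (2 * α - 2) :=
      Real.one_le_rpow_of_pos_of_le_one_of_nonpos (abs_pos.2 hε0) hε1 (by linarith)
    have hnormr : ‖|ε| ^ (2 * α - 2)‖ = |ε| ^ (2 * α - 2) := by
      rw [Real.norm_eq_abs, abs_of_nonneg (Real.rpow_nonneg (abs_nonneg ε) _)]
    rw [hnormr]
    have h3 : (2:ℝ) ^ ((1:ℝ) - α) * (ε ^ 2) ^ (α - 1) * Real.Gamma (1 - α) =
        ((2:ℝ) ^ (1 - α) * Real.Gamma (1 - α)) * |ε| ^ (2 * α - 2) := by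
      rw [e1]; ring
    rw [h3] at h2
    set G := (2:ℝ) ^ (1 - α) * Real.Gamma (1 - α)
    set L := |ε| ^ (2 * α - 2)
    have hInn : 0 ≤ ∫ t in Ioi 1, t ^ (-α) * exp (-(ε ^ 2 / 2 * t)) := by
      apply setIntegral_nonneg measurableSet_Ioi
      intro t ht
      have : (0:ℝ) < t := lt_trans one_pos ht
      positivity
    calc ‖∫ t in Set.Ioi (0:ℝ), Real.exp (-ε ^ 2 * t) • f ε t‖
        ≤ C + K * ∫ t in Ioi 1, t ^ (-α) * exp (-(ε ^ 2 / 2 * t)) := h1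
      _ ≤ C + K * (G * L) := by nlinarith
      _ ≤ (C + K * G) * L := by nlinarith
  · intro hα1
    subst hα1
    rw [isBigO_iff]
    refine ⟨C + K * (Real.log 2 + 1) + 2 * K, ?_⟩
    have hsm : ∀ᶠ ε : ℝ in nhdsWithin 0 {(0:ℝ)}ᶜ, |ε| ≤ exp (-1) := by
      apply eventually_nhdsWithin_of_eventually_nhds
      filter_upwards [Metric.ball_mem_nhds (0:ℝ) (Real.exp_pos (-1))] with ε hε
      rw [Metric.mem_ball, Real.dist_eq, sub_zero] at hε
      exact hε.le
    filter_upwards [hUev, hsm, self_mem_nhdsWithin] with ε hεU hεe hε0'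
    have hε0 : ε ≠ 0 := by simpa using hε0'
    have hae : 0 < |ε| := abs_pos.2 hε0
    have he1 : Real.exp (-1) ≤ 1 := Real.exp_le_one_iff.2 (by norm_num)
    have hε1 : |ε| ≤ 1 := hεe.trans he1
    have hb0 : 0 < ε ^ 2 / 2 := by positivity
    have hb1 : ε ^ 2 / 2 ≤ 1 := by nlinarith [sq_abs ε]
    have h1 := key ε hεU hε0
    have h2 := aux_log hb0 hb1
    have hlogeq : Real.log (1 / (ε ^ 2 / 2)) = Real.log 2 - 2 * Real.log |ε| := by
      rw [show (1:ℝ) / (ε ^ 2 / 2) = 2 / ε ^ 2 by field_simp,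
        Real.log_div two_ne_zero (pow_ne_zero 2 hε0), ← sq_abs ε, Real.log_pow]
      norm_num
    rw [hlogeq] at h2
    have hL : 1 ≤ -Real.log |ε| := by
      have := Real.log_le_log hae hεe
      rw [Real.log_exp] at this
      linarith
    have hnormr : ‖Real.log |ε|‖ = -Real.log |ε| := by
      rw [Real.norm_eq_abs, abs_of_nonpos (by linarith)]
    rw [hnormr]
    have hlog2 : (0:ℝ) ≤ Real.log 2 := Real.log_nonneg one_le_two
    calc ‖∫ t in Set.Ioi (0:ℝ), Real.exp (-ε ^ 2 * t) • f ε t‖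
        ≤ C + K * ∫ t in Ioi 1, t ^ (-(1:ℝ)) * exp (-(ε ^ 2 / 2 * t)) := h1
      _ ≤ C + K * (Real.log 2 - 2 * Real.log |ε| + 1) := by nlinarith
      _ ≤ (C + K * (Real.log 2 + 1) + 2 * K) * (-Real.log |ε|) := by
          nlinarith [mul_nonneg hC.le (by linarith : (0:ℝ) ≤ -Real.log |ε| - 1),
            mul_nonneg (mul_nonneg hK0.le (by linarith : (0:ℝ) ≤ Real.log 2 + 1))
              (by linarith : (0:ℝ) ≤ -Real.log |ε| - 1)]
end

section
/- Let ω satisfy ω(z−a) = (αz+β)e^{−z} + O(e^{−(1+q)z}) as z → +∞ with α > 0, q > 0, and ω bounded with ω(z) → 1 as z → −∞. Then as ε ↗ 0 (ε ∈ (−1,0)), ∫_ℝ ω(z−a) e^{(1+ε)z} dz = α/ε² − β/ε + O(1). -/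
open Real MeasureTheory Set Filter Asymptotics

lemma tend0' {α β ε : ℝ} (hε : ε < 0) :
    Tendsto (fun z : ℝ => (α * z + β) * Real.exp (ε * z)) atTop (nhds 0) := by
  have h1 : Tendsto (fun z : ℝ => -ε * z) atTop atTop :=
    tendsto_id.const_mul_atTop (by linarith)
  have h2 := (tendsto_pow_mul_exp_neg_atTop_nhds_zero 1).comp h1
  have h3 : Tendsto (fun z : ℝ => Real.exp (ε * z)) atTop (nhds 0) :=
    Real.tendsto_exp_atBot.comp (tendsto_id.const_mul_atTop_of_neg hε)
  have h4 := (h2.const_mul (α / (-ε))).add (h3.const_mul β)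
  rw [mul_zero, mul_zero, add_zero] at h4
  refine h4.congr fun z => ?_
  simp only [Function.comp_apply, pow_one]
  have h5 : -(-ε * z) = ε * z := by ring
  rw [h5]
  field_simp [hε.ne]

lemma helperIoi (α β ε c : ℝ) (hε : ε < 0) :
    IntegrableOn (fun z => (α * z + β) * Real.exp (ε * z)) (Ioi c) ∧
    ∫ z in Ioi c, (α * z + β) * Real.exp (ε * z)
      = ((α * c + β) / (-ε) + α / ε ^ 2) * Real.exp (ε * c) := by
  have hi : IntegrableOn (fun z => (α * z + β) * Real.exp (ε * z)) (Ioi c) := by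
    refine integrable_of_isBigO_exp_neg (a := c) (show (0:ℝ) < -ε/2 by linarith) ?_ ?_
    · exact (((continuous_const.mul continuous_id).add continuous_const).mul
        (Real.continuous_exp.comp (continuous_const.mul continuous_id))).continuousOn
    · have hne : ∀ x : ℝ, Real.exp (-(-ε/2) * x) = 0 → (α * x + β) * Real.exp (ε * x) = 0 :=
        fun x h => absurd h (Real.exp_ne_zero _)
      refine ((Asymptotics.isLittleO_iff_tendsto hne).2 ?_).isBigO
      refine (tend0' (α := α) (β := β) (ε := ε/2) (by linarith)).congr fun x => ?_
      rw [mul_div_assoc, ← Real.exp_sub]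
      ring_nf
  refine ⟨hi, ?_⟩
  have hF : ∀ x ∈ Ici c,
      HasDerivAt (fun z => ((α * z + β) / ε - α / ε ^ 2) * Real.exp (ε * z))
        ((α * x + β) * Real.exp (ε * x)) x := by
    intro x _
    have h1 : HasDerivAt (fun z : ℝ => (α * z + β) / ε - α / ε ^ 2) (α / ε) x := by
      have := ((((hasDerivAt_id x).const_mul α).add_const β).div_const ε).sub_const (α / ε ^ 2)
      simpa using this
    have h2 : HasDerivAt (fun z : ℝ => Real.exp (ε * z)) (ε * Real.exp (ε * x)) x := by
      have := ((hasDerivAt_id x).const_mul ε).exp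
      simpa [mul_comm] using this
    have h3 := h1.fun_mul h2
    refine h3.congr_deriv ?_
    field_simp [hε.ne]
    ring
  have htend : Tendsto (fun z => ((α * z + β) / ε - α / ε ^ 2) * Real.exp (ε * z)) atTop (nhds 0) := by
    refine (tend0' (α := α / ε) (β := β / ε - α / ε ^ 2) hε).congr fun z => ?_
    congr 1
    field_simp [hε.ne]
    ring
  rw [integral_Ioi_of_hasDerivAt_of_tendsto' hF hi htend]
  rw [div_neg]
  ring

lemma expIic (b c : ℝ) (hb : 0 < b) :
    IntegrableOn (fun z => Real.exp (b * z)) (Iic c) := by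
  rw [← Measure.map_neg_eq_self (volume : Measure ℝ)]
  have m : MeasurableEmbedding fun x : ℝ => -x := (Homeomorph.neg ℝ).measurableEmbedding
  rw [m.integrableOn_map_iff]
  simp only [Function.comp_def, neg_preimage, neg_Iic]
  refine (integrableOn_Ici_iff_integrableOn_Ioi).mpr
    (((exp_neg_integrableOn_Ioi (-c) hb)).congr_fun (fun x _ => by ring_nf) measurableSet_Ioi)

lemma expIicVal (b c : ℝ) (hb : 0 < b) :
    ∫ z in Iic c, Real.exp (b * z) = Real.exp (b * c) / b := by
  calc ∫ z in Iic c, Real.exp (b * z)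
      = ∫ x in Iic c, (fun y => Real.exp (-b * y)) (-x) := by
        refine setIntegral_congr_fun measurableSet_Iic fun x _ => by ring_nf
    _ = ∫ x in Ioi (-c), Real.exp (-b * x) := by
        simpa using integral_comp_neg_Iic c fun y => Real.exp (-b * y)
    _ = ∫ x in Ioi (-c), (0 * x + 1) * Real.exp (-b * x) := by
        refine setIntegral_congr_fun measurableSet_Ioi fun x _ => by ring
    _ = Real.exp (b * c) / b := by
        rw [(helperIoi 0 1 (-b) (-c) (by linarith)).2]
        simp
        ring

theorem stmt_11 (ω : ℝ → ℝ) (a α β q M : ℝ) (hα : 0 < α) (hq : 0 < q)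
    (hmeas : Measurable ω)
    (hbdd : ∀ z, |ω z| ≤ M)
    (hlim1 : Tendsto ω atBot (nhds 1))
    (hasymp : ∃ C z₀ : ℝ, ∀ z ≥ z₀,
      |ω (z - a) - (α * z + β) * Real.exp (-z)| ≤ C * Real.exp (-(1 + q) * z)) :
    (fun ε : ℝ =>
        (∫ z : ℝ, ω (z - a) * Real.exp ((1 + ε) * z)) - (α / ε ^ 2 - β / ε))
      =O[nhdsWithin 0 (Set.Iio 0)] fun _ : ℝ => (1 : ℝ) := by
  obtain ⟨C, z₀, hC⟩ := hasymp
  set z₁ : ℝ := max z₀ 0 with hz₁def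
  have hz₁0 : (0:ℝ) ≤ z₁ := le_max_right _ _
  have hC1 : ∀ z ≥ z₁, |ω (z - a) - (α * z + β) * Real.exp (-z)| ≤ C * Real.exp (-(1 + q) * z) :=
    fun z hz => hC z ((le_max_left _ _).trans hz)
  have hC0 : 0 ≤ C := by
    have h := (abs_nonneg _).trans (hC1 z₁ le_rfl)
    nlinarith [Real.exp_pos (-(1 + q) * z₁)]
  have hM0 : 0 ≤ M := (abs_nonneg _).trans (hbdd 0)
  rw [isBigO_iff]
  refine ⟨2 * M * Real.exp z₁ + C / q + (|α| * z₁ + |β|) * z₁, ?_⟩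
  filter_upwards [Ioo_mem_nhdsLT_of_mem
    (show (0:ℝ) ∈ Ioc (-(1/2)) 0 by constructor <;> norm_num)] with ε hε
  obtain ⟨hε1, hε0⟩ := hε
  have h1ε : (0:ℝ) < 1 + ε := by linarith
  have hεq : ε - q < 0 := by linarith
  set f : ℝ → ℝ := fun z => ω (z - a) * Real.exp ((1 + ε) * z) with hfdef
  set g : ℝ → ℝ := fun z => (α * z + β) * Real.exp (ε * z) with hgdef
  have hfmeas : Measurable f :=
    (hmeas.comp (measurable_id.sub_const a)).mul
      (Real.continuous_exp.comp (continuous_const.mul continuous_id)).measurable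
  have hgmeas : Measurable g :=
    ((measurable_const.mul measurable_id).add measurable_const).mul
      (Real.continuous_exp.comp (continuous_const.mul continuous_id)).measurable
  -- integrability on the left
  have int_left : IntegrableOn f (Iic z₁) := by
    refine Integrable.mono' ((expIic (1 + ε) z₁ h1ε).const_mul M)
      hfmeas.aestronglyMeasurable.restrict (Filter.Eventually.of_forall fun z => ?_)
    rw [Real.norm_eq_abs, hfdef, abs_mul, Real.abs_exp]
    exact mul_le_mul_of_nonneg_right (hbdd _) (Real.exp_pos _).le
  -- integrability of g
  have int_g_Ioi : ∀ c : ℝ, IntegrableOn g (Ioi c) := fun c => (helperIoi α β ε c hε0).1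
  -- error term on the right
  have herr_bound : ∀ z ∈ Ioi z₁, ‖f z - g z‖ ≤ C * Real.exp ((ε - q) * z) := by
    intro z hz
    have hkey : f z - g z = (ω (z - a) - (α * z + β) * Real.exp (-z)) * Real.exp ((1 + ε) * z) := by
      rw [hfdef, hgdef]
      simp only [sub_mul]
      congr 1
      rw [mul_assoc, ← Real.exp_add]
      ring_nf
    rw [Real.norm_eq_abs, hkey, abs_mul, Real.abs_exp]
    calc |ω (z - a) - (α * z + β) * Real.exp (-z)| * Real.exp ((1 + ε) * z)
        ≤ C * Real.exp (-(1 + q) * z) * Real.exp ((1 + ε) * z) :=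
          mul_le_mul_of_nonneg_right (hC1 z (le_of_lt hz)) (Real.exp_pos _).le
      _ = C * Real.exp ((ε - q) * z) := by rw [mul_assoc, ← Real.exp_add]; ring_nf
  have int_dom : IntegrableOn (fun z => C * Real.exp ((ε - q) * z)) (Ioi z₁) := by
    refine ((exp_neg_integrableOn_Ioi z₁ (show (0:ℝ) < q - ε by linarith)).congr_fun
      (fun x _ => by ring_nf) measurableSet_Ioi).const_mul C
  have int_err : IntegrableOn (fun z => f z - g z) (Ioi z₁) := by
    refine Integrable.mono' int_dom (hfmeas.sub hgmeas).aestronglyMeasurable.restrict ?_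
    rw [MeasureTheory.ae_restrict_iff' measurableSet_Ioi]
    exact Filter.Eventually.of_forall herr_bound
  have int_f_Ioi : IntegrableOn f (Ioi z₁) := by
    have h := int_err.add (int_g_Ioi z₁)
    exact h.congr (ae_of_all _ fun x => by simp)
  have int_f : Integrable f := by
    have h := int_left.union int_f_Ioi
    rwa [Iic_union_Ioi, integrableOn_univ] at h
  -- splitting
  have hsplit : ∫ z, f z = (∫ z in Iic z₁, f z) + ∫ z in Ioi z₁, f z :=
    (intervalIntegral.integral_Iic_add_Ioi int_left int_f_Ioi).symm
  have hsplit_err : ∫ z in Ioi z₁, f z = (∫ z in Ioi z₁, (f z - g z)) + ∫ z in Ioi z₁, g z := by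
    rw [← integral_add int_err (int_g_Ioi z₁)]
    simp
  have int_g_Ioc : IntegrableOn g (Ioc 0 z₁) := (int_g_Ioi 0).mono_set Ioc_subset_Ioi_self
  have hg0 : ∫ z in Ioi 0, g z = α / ε ^ 2 - β / ε := by
    rw [hgdef, (helperIoi α β ε 0 hε0).2]
    rw [mul_zero, zero_add, mul_zero, Real.exp_zero, mul_one, div_neg]
    ring
  have hsplit_g : ∫ z in Ioi 0, g z = (∫ z in Ioc 0 z₁, g z) + ∫ z in Ioi z₁, g z := by
    rw [← Ioc_union_Ioi_eq_Ioi hz₁0]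
    exact setIntegral_union (Ioc_disjoint_Ioi le_rfl) measurableSet_Ioi int_g_Ioc (int_g_Ioi z₁)
  -- bounds
  have B1 : |∫ z in Iic z₁, f z| ≤ 2 * M * Real.exp z₁ := by
    have h1 : |∫ z in Iic z₁, f z| ≤ ∫ z in Iic z₁, M * Real.exp ((1 + ε) * z) := by
      rw [← Real.norm_eq_abs]
      refine (norm_integral_le_integral_norm _).trans ?_
      refine integral_mono int_left.norm ((expIic (1 + ε) z₁ h1ε).const_mul M) fun z => ?_
      rw [Real.norm_eq_abs, hfdef, abs_mul, Real.abs_exp]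
      exact mul_le_mul_of_nonneg_right (hbdd _) (Real.exp_pos _).le
    rw [integral_const_mul, expIicVal _ _ h1ε] at h1
    have h2 : Real.exp ((1 + ε) * z₁) ≤ Real.exp z₁ :=
      Real.exp_le_exp.2 (by nlinarith)
    have h3 : Real.exp ((1 + ε) * z₁) / (1 + ε) ≤ 2 * Real.exp z₁ := by
      rw [div_le_iff₀ h1ε]
      nlinarith [Real.exp_pos z₁]
    calc |∫ z in Iic z₁, f z| ≤ M * (Real.exp ((1 + ε) * z₁) / (1 + ε)) := h1
      _ ≤ M * (2 * Real.exp z₁) := mul_le_mul_of_nonneg_left h3 hM0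
      _ = 2 * M * Real.exp z₁ := by ring
  have B2 : |∫ z in Ioi z₁, (f z - g z)| ≤ C / q := by
    have h1 : |∫ z in Ioi z₁, (f z - g z)| ≤ ∫ z in Ioi z₁, C * Real.exp ((ε - q) * z) := by
      rw [← Real.norm_eq_abs]
      refine (norm_integral_le_integral_norm _).trans ?_
      refine setIntegral_mono_on int_err.norm int_dom measurableSet_Ioi fun z hz =>
        herr_bound z hz
    have h2 : ∫ z in Ioi z₁, C * Real.exp ((ε - q) * z)
        = C * (Real.exp ((ε - q) * z₁) / (q - ε)) := by
      rw [integral_const_mul]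
      have hv : ∫ z in Ioi z₁, Real.exp ((ε - q) * z)
          = ∫ z in Ioi z₁, (0 * z + 1) * Real.exp ((ε - q) * z) := by
        refine setIntegral_congr_fun measurableSet_Ioi fun z _ => by ring
      rw [hv, (helperIoi 0 1 (ε - q) z₁ hεq).2]
      rw [zero_mul, zero_add, zero_div, add_zero, neg_sub]
      ring
    have h3 : Real.exp ((ε - q) * z₁) ≤ 1 :=
      Real.exp_le_one_iff.2 (by nlinarith)
    have h4 : Real.exp ((ε - q) * z₁) / (q - ε) ≤ 1 / q := by
      rw [div_le_div_iff₀ (by linarith) hq]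
      nlinarith
    calc |∫ z in Ioi z₁, (f z - g z)| ≤ C * (Real.exp ((ε - q) * z₁) / (q - ε)) := by
          rw [← h2]; exact h1
      _ ≤ C * (1 / q) := mul_le_mul_of_nonneg_left h4 hC0
      _ = C / q := by ring
  have B3 : |∫ z in Ioc 0 z₁, g z| ≤ (|α| * z₁ + |β|) * z₁ := by
    rw [← Real.norm_eq_abs]
    have hb : ∀ x ∈ Ioc (0:ℝ) z₁, ‖g x‖ ≤ |α| * z₁ + |β| := by
      intro x hx
      obtain ⟨hx1, hx2⟩ := hx
      rw [Real.norm_eq_abs, hgdef, abs_mul, Real.abs_exp]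
      have he : Real.exp (ε * x) ≤ 1 := Real.exp_le_one_iff.2 (by nlinarith)
      have hab : |α * x + β| ≤ |α| * z₁ + |β| := by
        refine (abs_add_le _ _).trans ?_
        rw [abs_mul, abs_of_pos hx1]
        have h6 : |α| * x ≤ |α| * z₁ := mul_le_mul_of_nonneg_left hx2 (abs_nonneg α)
        linarith
      nlinarith [abs_nonneg (α * x + β), Real.exp_pos (ε * x)]
    have h := norm_setIntegral_le_of_norm_le_const (μ := volume) measure_Ioc_lt_top
      hb
    rw [measureReal_def, Real.volume_Ioc, ENNReal.toReal_ofReal (by linarith : (0:ℝ) ≤ z₁ - 0)] at h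
    calc ‖∫ z in Ioc 0 z₁, g z‖ ≤ (|α| * z₁ + |β|) * (z₁ - 0) := h
      _ = (|α| * z₁ + |β|) * z₁ := by ring
  have key : (∫ z, f z) - (α / ε ^ 2 - β / ε)
      = (∫ z in Iic z₁, f z) + (∫ z in Ioi z₁, (f z - g z)) - ∫ z in Ioc 0 z₁, g z := by
    rw [hsplit, hsplit_err, ← hg0, hsplit_g]
    ring
  rw [norm_one, mul_one, Real.norm_eq_abs, key]
  have habs : |(∫ z in Iic z₁, f z) + (∫ z in Ioi z₁, (f z - g z)) - ∫ z in Ioc 0 z₁, g z|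
      ≤ |∫ z in Iic z₁, f z| + |∫ z in Ioi z₁, (f z - g z)| + |∫ z in Ioc 0 z₁, g z| := by
    rw [sub_eq_add_neg]
    exact (abs_add_three _ _ _).trans (by rw [abs_neg])
  linarith
end

section
/- Let φ : ℝ → (0,1] be positive, decreasing, with φ(x) ~ A₀ x e^{−x} as x → +∞ (A₀ > 0), and suppose h : ℝ × [t₀,∞) → [0,1] satisfies |h(σ_t + x, t) − φ(x)| ≤ C(1 + |x|³)e^{−x}/t for x ≤ t^{γ/6}, |h(σ_t+x,t) − φ(x)| ≤ C x e^{−x} for x > t^{γ/6}, and |h(σ_t+x,t) − φ(x)| ≤ C/t for x ≤ 0, where γ ∈ (0, 1/2]. Then there exist C' > 0 and t₁ such that for all t > t₁ and all r ∈ [0.01, 1.99], |∫ e^{rx} h(σ_t+x,t)² dx − ∫ e^{rx} φ(x)² dx| ≤ C'/t. -/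
open Real MeasureTheory Set Filter

lemma aux_even_integrable {f : ℝ → ℝ} (hev : ∀ x, f (-x) = f x) (hm : Measurable f)
    (hi : IntegrableOn f (Ioi 0)) : Integrable f := by
  have hIci : IntegrableOn f (Ici 0) := by
    rw [integrableOn_Ici_iff_integrableOn_Ioi]; exact hi
  have hG : Integrable (Set.indicator (Ici 0) f) :=
    hIci.integrable_indicator measurableSet_Ici
  have hGneg : Integrable (fun x => Set.indicator (Ici 0) f (-x)) := hG.comp_neg
  have heq : (fun x => Set.indicator (Ici 0) f (-x)) = Set.indicator (Iic 0) f := by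
    funext x
    by_cases hx : x ≤ 0
    · rw [Set.indicator_of_mem (by simpa using hx : -x ∈ Ici (0:ℝ)),
        Set.indicator_of_mem (by simpa using hx)]
      exact hev x
    · rw [Set.indicator_of_notMem (by simp; linarith : ¬ -x ∈ Ici (0:ℝ)),
        Set.indicator_of_notMem (by simpa using hx)]
  have hIic : Integrable (Set.indicator (Iic 0) f) := heq ▸ hGneg
  have hadd : Integrable (fun x => Set.indicator (Iic 0) f x + Set.indicator (Ioi 0) f x) :=
    hIic.add (hi.integrable_indicator measurableSet_Ioi)
  apply hadd.congr
  filter_upwards with x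
  by_cases hx : x ≤ 0
  · rw [Set.indicator_of_mem (by simpa using hx), Set.indicator_of_notMem (by simpa using hx)]
    ring
  · rw [Set.indicator_of_notMem (by simpa using hx),
      Set.indicator_of_mem (by simp at hx ⊢; linarith)]
    ring

lemma aux_poly_le_exp {x : ℝ} (hx : 0 ≤ x) :
    1 + x ^ 4 ≤ (1 + 800 ^ 4) * Real.exp (0.005 * x) := by
  have h1 : x ≤ (0.00125:ℝ)⁻¹ * Real.exp (0.00125 * x) := by
    have h1 : (0.00125:ℝ) * x ≤ Real.exp (0.00125 * x) := by
      linarith [Real.add_one_le_exp ((0.00125:ℝ)*x)]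
    have h2 : (0.00125:ℝ)⁻¹ * (0.00125 * x) ≤ (0.00125:ℝ)⁻¹ * Real.exp (0.00125 * x) :=
      mul_le_mul_of_nonneg_left h1 (by positivity)
    calc x = (0.00125:ℝ)⁻¹ * (0.00125 * x) := (inv_mul_cancel_left₀ (by norm_num) x).symm
    _ ≤ _ := h2
  have h2 : x ^ 4 ≤ ((0.00125:ℝ)⁻¹ * Real.exp (0.00125 * x)) ^ 4 :=
    pow_le_pow_left₀ hx h1 4
  have h3 : ((0.00125:ℝ)⁻¹ * Real.exp (0.00125 * x)) ^ 4
      = 800 ^ 4 * Real.exp (0.005 * x) := by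
    rw [mul_pow, ← Real.exp_nat_mul]
    norm_num
    ring_nf
  have h4 : (1:ℝ) ≤ Real.exp (0.005 * x) := Real.one_le_exp (by positivity)
  nlinarith [Real.exp_pos (0.005 * x)]

lemma aux_base_integrable : Integrable (fun x : ℝ => (1 + x ^ 4) * Real.exp (-0.01 * |x|)) := by
  apply aux_even_integrable
  · intro x; simp [abs_neg]; ring_nf
  · have : Continuous (fun x : ℝ => (1 + x ^ 4) * Real.exp (-0.01 * |x|)) := by continuity
    exact this.measurable
  · have hbase : IntegrableOn (fun x : ℝ => (1 + 800 ^ 4) * Real.exp (-0.005 * x)) (Ioi 0) :=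
      (exp_neg_integrableOn_Ioi 0 (by norm_num : (0:ℝ) < 0.005)).const_mul _
    apply hbase.mono' (Continuous.aestronglyMeasurable (by continuity))
    filter_upwards [ae_restrict_mem measurableSet_Ioi] with x hx
    have hx0 : (0:ℝ) ≤ x := le_of_lt hx
    rw [Real.norm_eq_abs, abs_of_nonneg (by positivity), abs_of_nonneg hx0]
    calc (1 + x ^ 4) * Real.exp (-0.01 * x)
        ≤ ((1 + 800 ^ 4) * Real.exp (0.005 * x)) * Real.exp (-0.01 * x) :=
          mul_le_mul_of_nonneg_right (aux_poly_le_exp hx0) (le_of_lt (Real.exp_pos _))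
    _ = (1 + 800 ^ 4) * Real.exp (-0.005 * x) := by
          rw [mul_assoc, ← Real.exp_add]; ring_nf

lemma aux_tail_integrableOn (T : ℝ) :
    IntegrableOn (fun x : ℝ => (1 + x ^ 4) * Real.exp (-0.01 * x)) (Ioi T) := by
  have hbase : IntegrableOn (fun x : ℝ => (1 + 800 ^ 4) * Real.exp (-0.005 * x)) (Ioi (max T 0)) :=
    (exp_neg_integrableOn_Ioi _ (by norm_num : (0:ℝ) < 0.005)).const_mul _
  have h1 : IntegrableOn (fun x : ℝ => (1 + x ^ 4) * Real.exp (-0.01 * x)) (Ioi (max T 0)) := by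
    apply hbase.mono' (Continuous.aestronglyMeasurable (by continuity))
    filter_upwards [ae_restrict_mem measurableSet_Ioi] with x hx
    have hx0 : (0:ℝ) ≤ x := le_trans (le_max_right _ _) (le_of_lt hx)
    rw [Real.norm_eq_abs, abs_of_nonneg (by positivity)]
    calc (1 + x ^ 4) * Real.exp (-0.01 * x)
        ≤ ((1 + 800 ^ 4) * Real.exp (0.005 * x)) * Real.exp (-0.01 * x) :=
          mul_le_mul_of_nonneg_right (aux_poly_le_exp hx0) (le_of_lt (Real.exp_pos _))
    _ = (1 + 800 ^ 4) * Real.exp (-0.005 * x) := by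
          rw [mul_assoc, ← Real.exp_add]; ring_nf
  rcases le_or_gt 0 T with hT | hT
  · simpa [max_eq_left hT] using h1
  · have h2 : IntegrableOn (fun x : ℝ => (1 + x ^ 4) * Real.exp (-0.01 * x)) (Ioc T 0) :=
      Continuous.integrableOn_Ioc (by continuity)
    have h3 := h2.union (by simpa [max_eq_right (le_of_lt hT)] using h1)
    apply h3.mono_set
    intro y hy
    rcases le_or_gt y 0 with hc | hc
    · exact Or.inl ⟨hy, hc⟩
    · exact Or.inr (by simpa [max_eq_right (le_of_lt hT)] using hc)

lemma aux_exp_integral (T : ℝ) :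
    ∫ x in Ioi T, Real.exp (-0.005 * x) = 200 * Real.exp (-0.005 * T) := by
  have h := integral_comp_mul_left_Ioi (fun y => Real.exp (-y)) T
    (by norm_num : (0:ℝ) < 0.005)
  simp only [smul_eq_mul] at h
  have h2 : (fun x : ℝ => Real.exp (-(0.005 * x))) = fun x : ℝ => Real.exp (-0.005 * x) := by
    funext x; ring_nf
  rw [h2] at h
  rw [h, integral_exp_neg_Ioi]
  norm_num

lemma aux_tail_le (T : ℝ) (hT : 0 ≤ T) :
    ∫ x in Ioi T, (1 + x ^ 4) * Real.exp (-0.01 * x)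
      ≤ (1 + 800 ^ 4) * (200 * Real.exp (-0.005 * T)) := by
  have h1 : ∫ x in Ioi T, (1 + x ^ 4) * Real.exp (-0.01 * x)
      ≤ ∫ x in Ioi T, (1 + 800 ^ 4) * Real.exp (-0.005 * x) := by
    apply setIntegral_mono_on (aux_tail_integrableOn T)
      ((exp_neg_integrableOn_Ioi T (by norm_num : (0:ℝ) < 0.005)).const_mul _)
      measurableSet_Ioi
    intro x hx
    have hx0 : (0:ℝ) ≤ x := le_trans hT (le_of_lt hx)
    calc (1 + x ^ 4) * Real.exp (-0.01 * x)
        ≤ ((1 + 800 ^ 4) * Real.exp (0.005 * x)) * Real.exp (-0.01 * x) :=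
          mul_le_mul_of_nonneg_right (aux_poly_le_exp hx0) (le_of_lt (Real.exp_pos _))
    _ = (1 + 800 ^ 4) * Real.exp (-0.005 * x) := by
          rw [mul_assoc, ← Real.exp_add]; ring_nf
  rw [integral_const_mul, aux_exp_integral] at h1
  exact h1

lemma aux_tendsto (γ : ℝ) (hγ : 0 < γ) (Q : ℝ) :
    Tendsto (fun t : ℝ => t * (Q * Real.exp (-0.005 * t ^ (γ/6)))) atTop (nhds 0) := by
  have hw : Tendsto (fun s : ℝ => Q * (s ^ ((6:ℝ)/γ) * Real.exp (-0.005 * s))) atTop (nhds 0) := by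
    have := (tendsto_rpow_mul_exp_neg_mul_atTop_nhds_zero ((6:ℝ)/γ) 0.005
      (by norm_num)).const_mul Q
    simpa using this
  have ht : Tendsto (fun t : ℝ => t ^ (γ/6)) atTop atTop :=
    tendsto_rpow_atTop (by positivity)
  have hcomp := hw.comp ht
  apply hcomp.congr'
  filter_upwards [eventually_ge_atTop (0:ℝ)] with t ht0
  have heq : (t ^ (γ/6)) ^ ((6:ℝ)/γ) = t := by
    rw [← Real.rpow_mul ht0]
    have : γ / 6 * (6 / γ) = 1 := by field_simp
    rw [this, Real.rpow_one]
  simp only [Function.comp]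
  rw [heq]
  ring

lemma aux_pows {x : ℝ} (hx : 0 ≤ x) :
    x ≤ 1 + x ^ 4 ∧ x ^ 2 ≤ 1 + x ^ 4 ∧ x ^ 3 ≤ 1 + x ^ 4 := by
  refine ⟨?_, ?_, ?_⟩
  · nlinarith [sq_nonneg (x^2 - 1), sq_nonneg (x - 1), sq_nonneg x, sq_nonneg (x^2 - x)]
  · nlinarith [sq_nonneg (x^2 - 1), sq_nonneg (x - 1), sq_nonneg x, sq_nonneg (x^2 - x)]
  · nlinarith [sq_nonneg (x^2 - 1), sq_nonneg (x - 1), sq_nonneg x, sq_nonneg (x^2 - x),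
      mul_nonneg hx hx]

set_option maxHeartbeats 1000000 in
theorem stmt_19 (φ : ℝ → ℝ) (A₀ : ℝ) (hA₀ : 0 < A₀)
    (hφpos : ∀ x, 0 < φ x) (hφle : ∀ x, φ x ≤ 1)
    (hφdec : StrictAnti φ)
    (hφasymp : Tendsto (fun x => φ x / (A₀ * x * Real.exp (-x))) atTop (nhds 1))
    (h : ℝ → ℝ → ℝ) (σ : ℝ → ℝ) (t₀ C γ : ℝ) (hC : 0 < C)
    (hγ : γ ∈ Set.Ioc (0:ℝ) (1/2))
    (hmem : ∀ x t, t₀ ≤ t → h x t ∈ Set.Icc (0:ℝ) 1)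
    (hmeas : ∀ t, Measurable fun x => h x t)
    (hbound1 : ∀ t ≥ t₀, ∀ x ≤ t ^ (γ / 6),
      |h (σ t + x) t - φ x| ≤ C * (1 + |x| ^ 3) * Real.exp (-x) / t)
    (hbound2 : ∀ t ≥ t₀, ∀ x, t ^ (γ / 6) < x →
      |h (σ t + x) t - φ x| ≤ C * x * Real.exp (-x))
    (hbound3 : ∀ t ≥ t₀, ∀ x ≤ (0:ℝ), |h (σ t + x) t - φ x| ≤ C / t) :
    ∃ C' > (0:ℝ), ∃ t₁ : ℝ, ∀ t > t₁, ∀ r ∈ Set.Icc (0.01:ℝ) 1.99,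
      |(∫ x : ℝ, Real.exp (r * x) * (h (σ t + x) t) ^ 2)
          - ∫ x : ℝ, Real.exp (r * x) * (φ x) ^ 2| ≤ C' / t := by
  obtain ⟨hγ0, hγ2⟩ := hγ
  -- x₀ from the asymptotics
  have hev2 : ∀ᶠ x in atTop, φ x / (A₀ * x * Real.exp (-x)) < 2 :=
    hφasymp.eventually_lt_const (by norm_num : (1:ℝ) < 2)
  obtain ⟨x₀', hx₀'⟩ := eventually_atTop.mp hev2
  set x₀ : ℝ := max x₀' 1 with hx₀def
  have hx₀1 : (1:ℝ) ≤ x₀ := le_max_right _ _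
  have hx₀0 : (0:ℝ) ≤ x₀ := by linarith only [hx₀1]
  have hφx₀ : ∀ x, x₀ ≤ x → φ x ≤ 2 * A₀ * (x * Real.exp (-x)) := by
    intro x hx
    have hxpos : (0:ℝ) < x := lt_of_lt_of_le one_pos (le_trans hx₀1 hx)
    have hd : 0 < A₀ * x * Real.exp (-x) := by positivity
    have h2 := hx₀' x (le_trans (le_max_left _ _) hx)
    rw [div_lt_iff₀ hd] at h2
    linarith only [h2]
  set K : ℝ := 2 * A₀ + 2 * C with hKdef
  have hK : 0 < K := by rw [hKdef]; positivity
  set M : ℝ := (2 + 2 * K * (1 + x₀)) * Real.exp x₀ with hMdef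
  have hM : 0 < M := by rw [hMdef]; positivity
  have hexpx₀ : (1:ℝ) ≤ Real.exp x₀ := Real.one_le_exp hx₀0
  have hM2 : 2 + 2 * K * (1 + x₀) ≤ M := by
    rw [hMdef]
    have ha : (0:ℝ) ≤ 2 + 2 * K * (1 + x₀) := by
      linarith only [mul_nonneg hK.le (by linarith only [hx₀0] : (0:ℝ) ≤ 1 + x₀)]
    exact le_mul_of_one_le_right ha hexpx₀
  have hKM : K ≤ M := by
    linarith only [hM2, hK, mul_nonneg hK.le hx₀0]
  set E : ℝ := 2 * C + 8 * C * M with hEdef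
  have hE : 0 < E := by rw [hEdef]; positivity
  set t₂ : ℝ := max (max t₀ 1) (x₀ ^ ((6:ℝ)/γ)) with ht₂def
  -- bound for φ on [0, ∞)
  have h1M : ∀ x : ℝ, 0 ≤ x → x ≤ x₀ → (1:ℝ) ≤ M * ((1 + x) * Real.exp (-x)) := by
    intro x hx0 hxle
    have h1 : Real.exp (-x₀) ≤ Real.exp (-x) := Real.exp_le_exp.mpr (by linarith only [hxle])
    have h2 : M * (1 * Real.exp (-x₀)) ≤ M * ((1 + x) * Real.exp (-x)) := by
      apply mul_le_mul_of_nonneg_left _ (le_of_lt hM)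
      apply mul_le_mul (by linarith only [hx0]) h1 (le_of_lt (Real.exp_pos _))
        (by linarith only [hx0])
    have h3 : M * (1 * Real.exp (-x₀)) = 2 + 2 * K * (1 + x₀) := by
      rw [hMdef, one_mul, mul_assoc, ← Real.exp_add, add_neg_cancel, Real.exp_zero, mul_one]
    linarith only [h2, h3, hK, mul_nonneg hK.le hx₀0]
  have hφM : ∀ x : ℝ, 0 ≤ x → φ x ≤ M * ((1 + x) * Real.exp (-x)) := by
    intro x hx0
    rcases le_or_gt x x₀ with hle | hlt
    · linarith only [h1M x hx0 hle, hφle x]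
    · have hb := hφx₀ x (le_of_lt hlt)
      have h2A : 2 * A₀ ≤ M := by
        rw [hKdef] at hKM
        linarith only [hKM, hC]
      have h2 : 2 * A₀ * x ≤ M * (1 + x) := by
        linarith only [mul_le_mul_of_nonneg_right h2A hx0, hM.le]
      have h3 := mul_le_mul_of_nonneg_right h2 (le_of_lt (Real.exp_pos (-x)))
      linarith only [h3, hb]
  -- constants for the final bound
  set G : ℝ := ∫ x : ℝ, (1 + x ^ 4) * Real.exp (-0.01 * |x|) with hGdef
  have hG0 : 0 ≤ G := by
    rw [hGdef]; apply integral_nonneg; intro x; positivity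
  set Q : ℝ := E * ((1 + 800 ^ 4) * 200) with hQdef
  have htt := aux_tendsto γ hγ0 Q
  have hev3 : ∀ᶠ t in atTop, t * (Q * Real.exp (-0.005 * t ^ (γ/6))) < 1 :=
    htt.eventually_lt_const (by norm_num : (0:ℝ) < 1)
  obtain ⟨t₃, ht₃⟩ := eventually_atTop.mp hev3
  refine ⟨E * G + 1, by linarith only [mul_nonneg (le_of_lt hE) hG0], max t₂ t₃, ?_⟩
  intro t ht r hr
  have ht2 : t₂ ≤ t := le_of_lt (lt_of_le_of_lt (le_max_left _ _) ht)
  have ht3 : t₃ ≤ t := le_of_lt (lt_of_le_of_lt (le_max_right _ _) ht)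
  have ht1 : (1:ℝ) ≤ t :=
    le_trans (le_trans (le_max_right t₀ 1) (le_max_left _ _)) ht2
  have ht0' : t₀ ≤ t :=
    le_trans (le_trans (le_max_left t₀ 1) (le_max_left _ _)) ht2
  have htpos : (0:ℝ) < t := lt_of_lt_of_le one_pos ht1
  set T : ℝ := t ^ (γ/6) with hTdef
  have hTx₀ : x₀ ≤ T := by
    have h1 : x₀ ^ ((6:ℝ)/γ) ≤ t := le_trans (le_max_right _ _) ht2
    have h2 : (x₀ ^ ((6:ℝ)/γ)) ^ (γ/6) ≤ t ^ (γ/6) :=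
      Real.rpow_le_rpow (by positivity) h1 (by positivity)
    rw [← Real.rpow_mul hx₀0] at h2
    have h3 : (6:ℝ) / γ * (γ/6) = 1 := by field_simp
    rwa [h3, Real.rpow_one] at h2
  have hT1 : (1:ℝ) ≤ T := le_trans hx₀1 hTx₀
  have hsq : ∀ x : ℝ, 0 ≤ x → x ≤ T → x ^ 2 ≤ t := by
    intro x hx0 hxT
    have h1 : x ^ 2 ≤ T ^ 2 := by
      linarith only [mul_le_mul hxT hxT hx0 (le_trans hx0 hxT), sq (x), sq T,
        sq_abs x]
    have h2 : T ^ 2 = t ^ (γ/6 * 2) := by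
      rw [hTdef, ← Real.rpow_natCast (t ^ (γ/6)) 2, ← Real.rpow_mul (le_of_lt htpos)]
      norm_num
    have h3 : t ^ (γ/6 * 2) ≤ t ^ (1:ℝ) :=
      Real.rpow_le_rpow_of_exponent_le ht1 (by linarith only [hγ2])
    rw [Real.rpow_one] at h3
    linarith only [h2 ▸ h1, h3]
  -- the sum bound
  have hsum : ∀ x : ℝ, 0 ≤ x →
      h (σ t + x) t + φ x ≤ 2 * M * ((1 + x) * Real.exp (-x)) := by
    intro x hx0
    have hH := hmem (σ t + x) t ht0'
    rcases le_or_gt x x₀ with hle | hlt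
    · linarith only [h1M x hx0 hle, hφM x hx0, hH.2]
    · have hx1 : (1:ℝ) ≤ x := le_trans hx₀1 (le_of_lt hlt)
      have hφb := hφx₀ x (le_of_lt hlt)
      have hdiff : |h (σ t + x) t - φ x| ≤ 2 * C * (x * Real.exp (-x)) := by
        rcases le_or_gt x T with hxT | hTx
        · have hb := hbound1 t ht0' x hxT
          rw [abs_of_nonneg (by linarith only [hx0] : (0:ℝ) ≤ x)] at hb
          have hx2 := hsq x hx0 hxT
          have hpoly : 1 + x ^ 3 ≤ 2 * x * t := by
            have ha := mul_le_mul_of_nonneg_left hx2 hx0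
            have hbb := mul_le_mul hx1 ht1 zero_le_one (by linarith only [hx0])
            linarith only [ha, hbb]
          refine le_trans hb ?_
          rw [div_le_iff₀ htpos]
          linarith only [mul_le_mul_of_nonneg_left hpoly
            (mul_nonneg (le_of_lt hC) (le_of_lt (Real.exp_pos (-x))))]
        · have hb := hbound2 t ht0' x hTx
          refine le_trans hb ?_
          linarith only [mul_nonneg (mul_nonneg hC.le hx0) (le_of_lt (Real.exp_pos (-x)))]
      have habs := (abs_le.mp hdiff).2
      have hfin : 4 * A₀ * (x * Real.exp (-x)) + 2 * C * (x * Real.exp (-x))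
          ≤ 2 * M * ((1 + x) * Real.exp (-x)) := by
        have h1 : 4 * A₀ + 2 * C ≤ 2 * M := by
          rw [hKdef] at hKM
          linarith only [hKM, hC]
        have h2 : x * Real.exp (-x) ≤ (1 + x) * Real.exp (-x) := by
          linarith only [(Real.exp_pos (-x)).le]
        linarith only [mul_le_mul h1 h2 (mul_nonneg hx0 (le_of_lt (Real.exp_pos (-x))))
          (by linarith only [hM] : (0:ℝ) ≤ 2 * M)]
      linarith only [habs, hφb, hfin]
  -- exponent combination
  have hexpc : ∀ x : ℝ, Real.exp (1.99 * x) * Real.exp (-x) * Real.exp (-x)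
      = Real.exp (-0.01 * x) := by
    intro x
    rw [← Real.exp_add, ← Real.exp_add]
    congr 1
    ring
  -- the key pointwise bound
  have hr1 := hr.1
  have hr2 := hr.2
  have hkey : ∀ x : ℝ,
      |Real.exp (r * x) * h (σ t + x) t ^ 2 - Real.exp (r * x) * φ x ^ 2|
        ≤ t⁻¹ * (E * ((1 + x ^ 4) * Real.exp (-0.01 * |x|)))
          + Set.indicator (Ioi T) (fun y => E * ((1 + y ^ 4) * Real.exp (-0.01 * y))) x := by
    intro x
    have hH := hmem (σ t + x) t ht0'
    have hφ0 := (hφpos x).le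
    have hsump : 0 ≤ h (σ t + x) t + φ x := by linarith only [hH.1, hφ0]
    have hfac : Real.exp (r * x) * h (σ t + x) t ^ 2 - Real.exp (r * x) * φ x ^ 2
        = Real.exp (r * x) * ((h (σ t + x) t - φ x) * (h (σ t + x) t + φ x)) := by ring
    rw [hfac, abs_mul, abs_mul, abs_of_nonneg (Real.exp_pos _).le, abs_of_nonneg hsump]
    rcases le_or_gt x 0 with hx0 | hx0
    · have hind : Set.indicator (Ioi T) (fun y => E * ((1 + y ^ 4) * Real.exp (-0.01 * y))) x
          = 0 := Set.indicator_of_notMem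
            (by simp only [mem_Ioi, not_lt]; linarith only [hx0, hT1]) _
      rw [hind, add_zero]
      have h1 : Real.exp (r * x) ≤ Real.exp (-0.01 * |x|) := by
        rw [abs_of_nonpos hx0]
        apply Real.exp_le_exp.mpr
        linarith only [mul_nonneg (sub_nonneg.mpr hr1) (neg_nonneg.mpr hx0)]
      have h2 : |h (σ t + x) t - φ x| ≤ C / t := hbound3 t ht0' x hx0
      have h3 : h (σ t + x) t + φ x ≤ 2 := by linarith only [hH.2, hφle x]
      have step1 : Real.exp (r * x) * (|h (σ t + x) t - φ x| * (h (σ t + x) t + φ x))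
          ≤ Real.exp (-0.01 * |x|) * ((C / t) * 2) := by
        apply mul_le_mul h1 (mul_le_mul h2 h3 hsump (by positivity))
          (mul_nonneg (abs_nonneg _) hsump) (Real.exp_pos _).le
      refine le_trans step1 ?_
      have heq1 : Real.exp (-0.01 * |x|) * ((C / t) * 2)
          = t⁻¹ * (2 * C * Real.exp (-0.01 * |x|)) := by
        field_simp
      rw [heq1]
      apply mul_le_mul_of_nonneg_left _ (by positivity : (0:ℝ) ≤ t⁻¹)
      rw [hEdef]
      have hx4 : (0:ℝ) ≤ x ^ 4 := by positivity
      have he := (Real.exp_pos (-0.01 * |x|)).le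
      have hs1 : Real.exp (-0.01 * |x|) ≤ (1 + x ^ 4) * Real.exp (-0.01 * |x|) :=
        le_mul_of_one_le_left he (by linarith only [hx4])
      have hs2 := mul_le_mul_of_nonneg_left hs1 (by linarith only [hC] : (0:ℝ) ≤ 2 * C)
      have hs3 : (0:ℝ) ≤ 8 * C * M * ((1 + x ^ 4) * Real.exp (-0.01 * |x|)) := by
        apply mul_nonneg (by linarith only [mul_pos hC hM])
        exact mul_nonneg (by linarith only [hx4]) he
      linarith only [hs2, hs3]
    · have habsx : |x| = x := abs_of_pos hx0
      have hup : Real.exp (r * x) ≤ Real.exp (1.99 * x) :=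
        Real.exp_le_exp.mpr (by linarith only [mul_nonneg (sub_nonneg.mpr hr2) hx0.le])
      have hs := hsum x hx0.le
      obtain ⟨p1, p2, p3⟩ := aux_pows hx0.le
      have hepos := (Real.exp_pos (-0.01 * x)).le
      rcases le_or_gt x T with hxT | hTx
      · have hind : Set.indicator (Ioi T) (fun y => E * ((1 + y ^ 4) * Real.exp (-0.01 * y))) x
            = 0 := Set.indicator_of_notMem
              (by simp only [mem_Ioi, not_lt]; linarith only [hxT]) _
        rw [hind, add_zero, habsx]
        have h2 : |h (σ t + x) t - φ x| ≤ C * (1 + x ^ 3) * Real.exp (-x) / t := by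
          have hb := hbound1 t ht0' x hxT
          rwa [habsx] at hb
        have step1 : Real.exp (r * x) * (|h (σ t + x) t - φ x| * (h (σ t + x) t + φ x))
            ≤ Real.exp (1.99 * x) * ((C * (1 + x ^ 3) * Real.exp (-x) / t)
              * (2 * M * ((1 + x) * Real.exp (-x)))) := by
          apply mul_le_mul hup (mul_le_mul h2 hs hsump ?_)
            (mul_nonneg (abs_nonneg _) hsump) (Real.exp_pos _).le
          apply div_nonneg _ htpos.le
          apply mul_nonneg (mul_nonneg hC.le (by positivity)) (Real.exp_pos _).le
        refine le_trans step1 ?_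
        have heq1 : Real.exp (1.99 * x) * ((C * (1 + x ^ 3) * Real.exp (-x) / t)
              * (2 * M * ((1 + x) * Real.exp (-x))))
            = t⁻¹ * ((2 * C * M * ((1 + x ^ 3) * (1 + x)))
              * (Real.exp (1.99 * x) * Real.exp (-x) * Real.exp (-x))) := by
          field_simp
        rw [heq1, hexpc x]
        apply mul_le_mul_of_nonneg_left _ (by positivity : (0:ℝ) ≤ t⁻¹)
        rw [hEdef]
        have hpoly : 2 * C * M * ((1 + x ^ 3) * (1 + x)) ≤ (2 * C + 8 * C * M) * (1 + x ^ 4) := by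
          have hq : (1 + x ^ 3) * (1 + x) ≤ 4 * (1 + x ^ 4) := by
            nlinarith only [p1, p3]
          have hcm : (0:ℝ) ≤ 2 * C * M := mul_nonneg (by linarith only [hC]) hM.le
          linarith only [mul_le_mul_of_nonneg_left hq hcm, mul_nonneg (le_of_lt hC)
            (by positivity : (0:ℝ) ≤ 1 + x ^ 4)]
        linarith only [mul_le_mul_of_nonneg_right hpoly hepos]
      · have hind : Set.indicator (Ioi T) (fun y => E * ((1 + y ^ 4) * Real.exp (-0.01 * y))) x
            = E * ((1 + x ^ 4) * Real.exp (-0.01 * x)) := Set.indicator_of_mem hTx _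
        rw [hind, habsx]
        have hg0 : 0 ≤ t⁻¹ * (E * ((1 + x ^ 4) * Real.exp (-0.01 * x))) := by
          apply mul_nonneg (by positivity)
          apply mul_nonneg hE.le (by positivity)
        refine le_trans ?_ (le_add_of_nonneg_left hg0)
        have h2 := hbound2 t ht0' x hTx
        have step1 : Real.exp (r * x) * (|h (σ t + x) t - φ x| * (h (σ t + x) t + φ x))
            ≤ Real.exp (1.99 * x) * ((C * x * Real.exp (-x))
              * (2 * M * ((1 + x) * Real.exp (-x)))) := by
          apply mul_le_mul hup (mul_le_mul h2 hs hsump ?_)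
            (mul_nonneg (abs_nonneg _) hsump) (Real.exp_pos _).le
          apply mul_nonneg (mul_nonneg hC.le hx0.le) (Real.exp_pos _).le
        refine le_trans step1 ?_
        have heq1 : Real.exp (1.99 * x) * ((C * x * Real.exp (-x))
              * (2 * M * ((1 + x) * Real.exp (-x))))
            = (2 * C * M * (x * (1 + x)))
              * (Real.exp (1.99 * x) * Real.exp (-x) * Real.exp (-x)) := by ring
        rw [heq1, hexpc x]
        rw [hEdef]
        have hpoly : 2 * C * M * (x * (1 + x)) ≤ (2 * C + 8 * C * M) * (1 + x ^ 4) := by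
          have hq : x * (1 + x) ≤ 4 * (1 + x ^ 4) := by
            nlinarith only [p1, p2]
          have hcm : (0:ℝ) ≤ 2 * C * M := mul_nonneg (by linarith only [hC]) hM.le
          linarith only [mul_le_mul_of_nonneg_left hq hcm, mul_nonneg (le_of_lt hC)
            (by positivity : (0:ℝ) ≤ 1 + x ^ 4)]
        linarith only [mul_le_mul_of_nonneg_right hpoly hepos]
  -- measurability
  have hmh : Measurable fun x : ℝ => h (σ t + x) t :=
    (hmeas t).comp (measurable_id.const_add (σ t))
  have hφm : Measurable φ := hφdec.antitone.measurable
  have hexm : Measurable fun x : ℝ => Real.exp (r * x) :=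
    Real.measurable_exp.comp (measurable_id.const_mul r)
  have hfm : Measurable fun x : ℝ => Real.exp (r * x) * h (σ t + x) t ^ 2 :=
    hexm.mul (hmh.pow_const 2)
  have hgm : Measurable fun x : ℝ => Real.exp (r * x) * φ x ^ 2 :=
    hexm.mul (hφm.pow_const 2)
  -- domination
  have hdom : ∀ ψ : ℝ → ℝ, (∀ x, 0 ≤ ψ x) → (∀ x, ψ x ≤ 1) →
      (∀ x, 0 ≤ x → ψ x ≤ 2 * M * ((1 + x) * Real.exp (-x))) →
      ∀ x, ‖Real.exp (r * x) * ψ x ^ 2‖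
        ≤ (1 + 16 * M ^ 2) * ((1 + x ^ 4) * Real.exp (-0.01 * |x|)) := by
    intro ψ h0 h1 h2 x
    have hψ0 := h0 x
    rw [Real.norm_eq_abs, abs_of_nonneg (by positivity)]
    rcases le_or_gt x 0 with hx | hx
    · have he : Real.exp (r * x) ≤ Real.exp (-0.01 * |x|) := by
        rw [abs_of_nonpos hx]
        apply Real.exp_le_exp.mpr
        linarith only [mul_nonneg (sub_nonneg.mpr hr1) (neg_nonneg.mpr hx)]
      have hψ1 : ψ x ^ 2 ≤ 1 := by
        have := mul_le_mul (h1 x) (h1 x) hψ0 zero_le_one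
        linarith only [this, sq_abs (ψ x), sq (ψ x)]
      have step1 : Real.exp (r * x) * ψ x ^ 2 ≤ Real.exp (-0.01 * |x|) * 1 :=
        mul_le_mul he hψ1 (by positivity) (Real.exp_pos _).le
      refine le_trans step1 ?_
      have hx4 : (0:ℝ) ≤ x ^ 4 := by positivity
      have hee := (Real.exp_pos (-0.01 * |x|)).le
      have hs1 : Real.exp (-0.01 * |x|) ≤ (1 + x ^ 4) * Real.exp (-0.01 * |x|) :=
        le_mul_of_one_le_left hee (by linarith only [hx4])
      have hs2 : (1 + x ^ 4) * Real.exp (-0.01 * |x|)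
          ≤ (1 + 16 * M ^ 2) * ((1 + x ^ 4) * Real.exp (-0.01 * |x|)) :=
        le_mul_of_one_le_left (mul_nonneg (by linarith only [hx4]) hee)
          (by linarith only [sq_nonneg M])
      linarith only [hs1, hs2]
    · rw [abs_of_pos hx]
      have hup : Real.exp (r * x) ≤ Real.exp (1.99 * x) :=
        Real.exp_le_exp.mpr (by linarith only [mul_nonneg (sub_nonneg.mpr hr2) hx.le])
      have hb := h2 x hx.le
      have hψ2 : ψ x ^ 2 ≤ (2 * M * ((1 + x) * Real.exp (-x))) ^ 2 :=
        pow_le_pow_left₀ hψ0 hb 2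
      have step1 : Real.exp (r * x) * ψ x ^ 2
          ≤ Real.exp (1.99 * x) * (2 * M * ((1 + x) * Real.exp (-x))) ^ 2 :=
        mul_le_mul hup hψ2 (by positivity) (Real.exp_pos _).le
      refine le_trans step1 ?_
      have heq1 : Real.exp (1.99 * x) * (2 * M * ((1 + x) * Real.exp (-x))) ^ 2
          = (4 * M ^ 2 * (1 + x) ^ 2)
            * (Real.exp (1.99 * x) * Real.exp (-x) * Real.exp (-x)) := by ring
      rw [heq1, hexpc x]
      obtain ⟨p1, p2, p3⟩ := aux_pows hx.le
      have hp : (1 + x) ^ 2 ≤ 4 * (1 + x ^ 4) := by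
        nlinarith only [p1, p2]
      have hepos := (Real.exp_pos (-0.01 * x)).le
      have h4M : (0:ℝ) ≤ 4 * M ^ 2 := by positivity
      linarith only [mul_le_mul_of_nonneg_right (mul_le_mul_of_nonneg_left hp h4M) hepos,
        mul_nonneg (by positivity : (0:ℝ) ≤ 1 + x ^ 4) hepos]
  -- integrability
  have Ih : Integrable (fun x : ℝ => Real.exp (r * x) * h (σ t + x) t ^ 2) := by
    apply (aux_base_integrable.const_mul (1 + 16 * M ^ 2)).mono'
      hfm.aestronglyMeasurable
    apply ae_of_all
    apply hdom
    · intro x; exact (hmem _ t ht0').1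
    · intro x; exact (hmem _ t ht0').2
    · intro x hx
      have hsx := hsum x hx
      linarith only [hsx, (hφpos x).le]
  have Iφ : Integrable (fun x : ℝ => Real.exp (r * x) * φ x ^ 2) := by
    apply (aux_base_integrable.const_mul (1 + 16 * M ^ 2)).mono'
      hgm.aestronglyMeasurable
    apply ae_of_all
    apply hdom
    · intro x; exact (hφpos x).le
    · intro x; exact hφle x
    · intro x hx
      have hsx := hsum x hx
      linarith only [hsx, (hmem (σ t + x) t ht0').1]
  have Ig : Integrable (fun x : ℝ => t⁻¹ * (E * ((1 + x ^ 4) * Real.exp (-0.01 * |x|)))) :=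
    (aux_base_integrable.const_mul E).const_mul t⁻¹
  have Iq : Integrable (Set.indicator (Ioi T) fun y => E * ((1 + y ^ 4) * Real.exp (-0.01 * y))) :=
    MeasureTheory.IntegrableOn.integrable_indicator
      ((aux_tail_integrableOn T).const_mul E) measurableSet_Ioi
  -- final estimate
  have htail : Q * Real.exp (-0.005 * T) ≤ 1 / t := by
    have h1 := ht₃ t ht3
    rw [← hTdef] at h1
    rw [le_div_iff₀ htpos]
    linarith only [h1]
  calc |(∫ x : ℝ, Real.exp (r * x) * h (σ t + x) t ^ 2)
          - ∫ x : ℝ, Real.exp (r * x) * φ x ^ 2|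
      = |∫ x : ℝ, (Real.exp (r * x) * h (σ t + x) t ^ 2 - Real.exp (r * x) * φ x ^ 2)| := by
        rw [integral_sub Ih Iφ]
    _ ≤ ∫ x : ℝ, |Real.exp (r * x) * h (σ t + x) t ^ 2 - Real.exp (r * x) * φ x ^ 2| := by
        have hni := norm_integral_le_integral_norm (μ := volume)
          (fun x : ℝ => Real.exp (r * x) * h (σ t + x) t ^ 2 - Real.exp (r * x) * φ x ^ 2)
        simpa [Real.norm_eq_abs] using hni
    _ ≤ ∫ x : ℝ, (t⁻¹ * (E * ((1 + x ^ 4) * Real.exp (-0.01 * |x|)))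
          + Set.indicator (Ioi T) (fun y => E * ((1 + y ^ 4) * Real.exp (-0.01 * y))) x) := by
        apply integral_mono (Ih.sub Iφ).abs (Ig.add Iq)
        intro x
        exact hkey x
    _ = t⁻¹ * (E * G) + ∫ y in Ioi T, E * ((1 + y ^ 4) * Real.exp (-0.01 * y)) := by
        rw [integral_add Ig Iq, integral_indicator measurableSet_Ioi,
          integral_const_mul, integral_const_mul]
    _ ≤ t⁻¹ * (E * G) + Q * Real.exp (-0.005 * T) := by
        apply add_le_add_right
        rw [integral_const_mul]
        calc E * ∫ y in Ioi T, (1 + y ^ 4) * Real.exp (-0.01 * y)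
            ≤ E * ((1 + 800 ^ 4) * (200 * Real.exp (-0.005 * T))) :=
              mul_le_mul_of_nonneg_left (aux_tail_le T (by linarith only [hT1])) hE.le
          _ = Q * Real.exp (-0.005 * T) := by rw [hQdef]; ring
    _ ≤ t⁻¹ * (E * G) + 1 / t := add_le_add_right htail _
    _ = (E * G + 1) / t := by field_simp
end
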